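/- Let k, l be positive natural numbers and R > 1, C > 0 real numbers. Let F : ℕ → (k×k complex matrices), G : ℕ → (l×l complex matrices) and X : ℕ → (l×k complex matrices) be sequences with ‖F_j‖ ≤ C·R^j·j!, ‖G_j‖ ≤ C·R^j·j! and ‖X_j‖ ≤ C·R^j·j! for all j, where ‖·‖ denotes the L∞ operator norm on matrices (maximum absolute row sum), which is submultiplicative for matrix products. Let Z : ℕ → (l×k complex matrices) satisfy Z_0 = 0 and, for every j ≥ 1, Z_j·F_0 − G_0·Z_j + j·Z_j = −X_{j−1} + ∑_{p=1}^{j} (G_p·Z_{j−p} − Z_{j−p}·F_p). Then there exists D > 0 such that ‖Z_j‖ ≤ D·R^j·j! for all j. -/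

import Mathlib

set_option maxHeartbeats 1000000

attribute [local instance] Matrix.linftyOpNormedAddCommGroup
attribute [local instance] Matrix.linftyOpNormedSpace

lemma aux_choose_19 (j p : ℕ) (h1 : 1 ≤ p) (h2 : p < j) : j ≤ j.choose p := by
  induction j with
  | zero => omega
  | succ n ih =>
    rcases Nat.lt_or_ge p n with hp | hp
    · have h3 : n ≤ n.choose p := ih hp
      have h4 : 1 ≤ n.choose (p - 1) := Nat.choose_pos (by omega)
      have h5 : (n + 1).choose p = n.choose (p - 1) + n.choose p := by
        obtain ⟨q, rfl⟩ : ∃ q, p = q + 1 := ⟨p - 1, by omega⟩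
        rw [Nat.choose_succ_succ]
        simp
      omega
    · have hpn : p = n := by omega
      subst hpn
      rw [Nat.choose_succ_self_right]

lemma aux_fact_19 (j p : ℕ) (h1 : 1 ≤ p) (h2 : p < j) :
    p.factorial * (j - p).factorial ≤ (j - 1).factorial := by
  have hc := Nat.choose_mul_factorial_mul_factorial (le_of_lt h2)
  have hj : j.factorial = j * (j - 1).factorial := by
    obtain ⟨m, rfl⟩ : ∃ m, j = m + 1 := ⟨j - 1, by omega⟩
    rw [Nat.factorial_succ]
    simp
  have hch := aux_choose_19 j p h1 h2
  have : j * (p.factorial * (j - p).factorial) ≤ j * (j - 1).factorial := by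
    calc j * (p.factorial * (j - p).factorial)
        ≤ j.choose p * (p.factorial * (j - p).factorial) :=
          Nat.mul_le_mul_right _ hch
      _ = j.factorial := by rw [← hc]; ring
      _ = j * (j - 1).factorial := hj
  exact Nat.le_of_mul_le_mul_left this (by omega)

theorem stmt_19 (k l : ℕ) (hk : 0 < k) (hl : 0 < l) (R C : ℝ) (hR : 1 < R) (hC : 0 < C)
    (F : ℕ → Matrix (Fin k) (Fin k) ℂ) (G : ℕ → Matrix (Fin l) (Fin l) ℂ)
    (X Z : ℕ → Matrix (Fin l) (Fin k) ℂ)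
    (hF : ∀ j : ℕ, ‖F j‖ ≤ C * R ^ j * j.factorial)
    (hG : ∀ j : ℕ, ‖G j‖ ≤ C * R ^ j * j.factorial)
    (hX : ∀ j : ℕ, ‖X j‖ ≤ C * R ^ j * j.factorial)
    (hZ0 : Z 0 = 0)
    (hrec : ∀ j : ℕ, 1 ≤ j →
      Z j * F 0 - G 0 * Z j + j • Z j
        = -X (j - 1) + ∑ p ∈ Finset.Icc 1 j, (G p * Z (j - p) - Z (j - p) * F p)) :
    ∃ D : ℝ, 0 < D ∧ ∀ j : ℕ, ‖Z j‖ ≤ D * R ^ j * j.factorial := by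
  obtain ⟨N, hNdef⟩ : ∃ N : ℕ, N = ⌈5 * C⌉₊ + 1 := ⟨_, rfl⟩
  obtain ⟨D, hDdef⟩ : ∃ D : ℝ, D = 1 + 2 * C + ∑ i ∈ Finset.range N, ‖Z i‖ := ⟨_, rfl⟩
  have hsum_nonneg : (0:ℝ) ≤ ∑ i ∈ Finset.range N, ‖Z i‖ :=
    Finset.sum_nonneg fun i _ => norm_nonneg _
  have hD1 : 1 ≤ D := by rw [hDdef]; linarith
  have hD2C : 2 * C ≤ D := by rw [hDdef]; linarith
  have hDpos : 0 < D := lt_of_lt_of_le one_pos hD1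
  have hRpos : (0:ℝ) < R := lt_trans one_pos hR
  have hP1 : ∀ j : ℕ, (1:ℝ) ≤ R ^ j * j.factorial := by
    intro j
    have h1 : (1:ℝ) ≤ R ^ j := one_le_pow₀ (le_of_lt hR)
    have h2 : (1:ℝ) ≤ j.factorial := by exact_mod_cast Nat.one_le_iff_ne_zero.mpr j.factorial_ne_zero
    nlinarith
  have hPpos : ∀ j : ℕ, (0:ℝ) < R ^ j * j.factorial := fun j => lt_of_lt_of_le one_pos (hP1 j)
  have hF0 : ‖F 0‖ ≤ C := by have := hF 0; simpa using this
  have hG0 : ‖G 0‖ ≤ C := by have := hG 0; simpa using this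
  refine ⟨D, hDpos, ?_⟩
  intro j
  induction j using Nat.strong_induction_on with
  | _ j ih =>
  by_cases hj : j < N
  · -- base case
    have h1 : ‖Z j‖ ≤ D := by
      have : ‖Z j‖ ≤ ∑ i ∈ Finset.range N, ‖Z i‖ :=
        Finset.single_le_sum (fun i _ => norm_nonneg (Z i)) (Finset.mem_range.mpr hj)
      rw [hDdef]; linarith
    calc ‖Z j‖ ≤ D := h1
      _ = D * 1 := (mul_one D).symm
      _ ≤ D * (R ^ j * j.factorial) := by
          exact mul_le_mul_of_nonneg_left (hP1 j) (le_of_lt hDpos)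
      _ = D * R ^ j * j.factorial := by ring
  · push_neg at hj  -- N ≤ j
    have hj1 : 1 ≤ j := le_trans (by omega) hj
    have hjC : 5 * C < (j : ℝ) := by
      have h1 : 5 * C ≤ (⌈5 * C⌉₊ : ℝ) := Nat.le_ceil _
      have h2 : (N : ℝ) ≤ (j : ℝ) := by exact_mod_cast hj
      have h3 : ((⌈5 * C⌉₊ : ℕ) : ℝ) + 1 = (N : ℝ) := by rw [hNdef]; push_cast; ring
      linarith
    -- norm of the recursion
    have hrecj := hrec j hj1
    have hsmul : (j : ℝ) * ‖Z j‖ = ‖(j : ℕ) • Z j‖ := by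
      rw [RCLike.norm_nsmul ℂ j (Z j)]; simp
    have heq : (j : ℕ) • Z j
        = -X (j - 1) + (∑ p ∈ Finset.Icc 1 j, (G p * Z (j - p) - Z (j - p) * F p))
          - (Z j * F 0 - G 0 * Z j) := by
      rw [← hrecj]; abel
    -- bound the sum term
    have hsumbound : ‖∑ p ∈ Finset.Icc 1 j, (G p * Z (j - p) - Z (j - p) * F p)‖
        ≤ 2 * C * D * R ^ j * j.factorial := by
      have hIcc : Finset.Icc 1 j = insert j (Finset.Icc 1 (j - 1)) := by
        ext x; simp [Finset.mem_Icc, Finset.mem_insert]; omega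
      have hnotmem : j ∉ Finset.Icc 1 (j - 1) := by simp [Finset.mem_Icc]; omega
      rw [hIcc, Finset.sum_insert hnotmem]
      have hterm_j : G j * Z (j - j) - Z (j - j) * F j = 0 := by
        simp [Nat.sub_self, hZ0]
      rw [hterm_j, zero_add]
      have hbound : ∀ p ∈ Finset.Icc 1 (j - 1),
          ‖G p * Z (j - p) - Z (j - p) * F p‖ ≤ 2 * C * D * R ^ j * (j - 1).factorial := by
        intro p hp
        rw [Finset.mem_Icc] at hp
        obtain ⟨hp1, hp2⟩ := hp
        have hplt : p < j := by omega
        have hjp : j - p < j := by omega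
        have hZjp : ‖Z (j - p)‖ ≤ D * R ^ (j - p) * (j - p).factorial := ih (j - p) hjp
        have hGp := hG p
        have hFp := hF p
        have hZnn : (0:ℝ) ≤ ‖Z (j - p)‖ := norm_nonneg _
        have hGZ : ‖G p * Z (j - p)‖ ≤ ‖G p‖ * ‖Z (j - p)‖ := Matrix.linfty_opNorm_mul _ _
        have hZF : ‖Z (j - p) * F p‖ ≤ ‖Z (j - p)‖ * ‖F p‖ := Matrix.linfty_opNorm_mul _ _
        have hfact : (p.factorial : ℝ) * (j - p).factorial ≤ (j - 1).factorial := by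
          exact_mod_cast aux_fact_19 j p hp1 hplt
        have hRsplit : R ^ p * R ^ (j - p) = R ^ j := by
          rw [← pow_add]; congr 1; omega
        have hb1 : ‖G p‖ * ‖Z (j - p)‖ ≤ C * D * R ^ j * (j - 1).factorial := by
          have h1 : ‖G p‖ * ‖Z (j - p)‖
              ≤ (C * R ^ p * p.factorial) * (D * R ^ (j - p) * (j - p).factorial) := by
            apply mul_le_mul hGp hZjp hZnn
            positivity
          have h2 : (C * R ^ p * p.factorial) * (D * R ^ (j - p) * (j - p).factorial)
              = C * D * R ^ j * ((p.factorial : ℝ) * (j - p).factorial) := by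
            rw [← hRsplit]; ring
          have h3 : C * D * R ^ j * ((p.factorial : ℝ) * (j - p).factorial)
              ≤ C * D * R ^ j * (j - 1).factorial := by
            apply mul_le_mul_of_nonneg_left hfact; positivity
          linarith
        have hb2 : ‖Z (j - p)‖ * ‖F p‖ ≤ C * D * R ^ j * (j - 1).factorial := by
          have h1 : ‖Z (j - p)‖ * ‖F p‖
              ≤ (D * R ^ (j - p) * (j - p).factorial) * (C * R ^ p * p.factorial) := by
            apply mul_le_mul hZjp hFp (norm_nonneg _)
            positivity
          have h2 : (D * R ^ (j - p) * (j - p).factorial) * (C * R ^ p * p.factorial)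
              = C * D * R ^ j * ((p.factorial : ℝ) * (j - p).factorial) := by
            rw [← hRsplit]; ring
          have h3 : C * D * R ^ j * ((p.factorial : ℝ) * (j - p).factorial)
              ≤ C * D * R ^ j * (j - 1).factorial := by
            apply mul_le_mul_of_nonneg_left hfact; positivity
          linarith
        calc ‖G p * Z (j - p) - Z (j - p) * F p‖
            ≤ ‖G p * Z (j - p)‖ + ‖Z (j - p) * F p‖ := norm_sub_le _ _
          _ ≤ C * D * R ^ j * (j - 1).factorial + C * D * R ^ j * (j - 1).factorial := by
              linarith
          _ = 2 * C * D * R ^ j * (j - 1).factorial := by ring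
      calc ‖∑ p ∈ Finset.Icc 1 (j - 1), (G p * Z (j - p) - Z (j - p) * F p)‖
          ≤ ∑ p ∈ Finset.Icc 1 (j - 1), ‖G p * Z (j - p) - Z (j - p) * F p‖ :=
            norm_sum_le _ _
        _ ≤ ∑ p ∈ Finset.Icc 1 (j - 1), (2 * C * D * R ^ j * (j - 1).factorial) :=
            Finset.sum_le_sum hbound
        _ = (j - 1 : ℕ) * (2 * C * D * R ^ j * (j - 1).factorial) := by
            rw [Finset.sum_const, Nat.card_Icc]
            simp [nsmul_eq_mul]
        _ ≤ 2 * C * D * R ^ j * j.factorial := by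
            have hfj : ((j - 1 : ℕ) : ℝ) * (j - 1).factorial ≤ (j.factorial : ℝ) := by
              have : (j - 1 + 1 : ℕ) * (j - 1).factorial = j.factorial := by
                rw [← Nat.factorial_succ]; congr 1; omega
              have h2 : (j - 1 : ℕ) * (j - 1).factorial ≤ j.factorial := by
                calc (j - 1 : ℕ) * (j - 1).factorial ≤ (j - 1 + 1) * (j - 1).factorial :=
                    Nat.mul_le_mul_right _ (by omega)
                  _ = j.factorial := this
              exact_mod_cast h2
            have hcd : (0:ℝ) ≤ 2 * C * D * R ^ j := by positivity
            calc ((j - 1 : ℕ) : ℝ) * (2 * C * D * R ^ j * (j - 1).factorial)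
                = 2 * C * D * R ^ j * (((j - 1 : ℕ) : ℝ) * (j - 1).factorial) := by ring
              _ ≤ 2 * C * D * R ^ j * j.factorial := mul_le_mul_of_nonneg_left hfj hcd
    -- bound the X term
    have hXbound : ‖X (j - 1)‖ ≤ C * R ^ j * j.factorial := by
      have h1 := hX (j - 1)
      have h2 : (R : ℝ) ^ (j - 1) ≤ R ^ j :=
        pow_le_pow_right₀ (le_of_lt hR) (by omega)
      have h3 : ((j - 1).factorial : ℝ) ≤ j.factorial := by
        exact_mod_cast Nat.factorial_le (by omega)
      have h4 : (0:ℝ) ≤ ((j-1).factorial : ℝ) := by positivity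
      have h6 : R ^ (j - 1) * (((j-1).factorial : ℕ) : ℝ) ≤ R ^ j * (j.factorial : ℝ) :=
        mul_le_mul h2 h3 h4 (by positivity)
      calc ‖X (j - 1)‖ ≤ C * R ^ (j - 1) * ((j-1).factorial : ℝ) := h1
        _ = C * (R ^ (j - 1) * ((j-1).factorial : ℝ)) := by ring
        _ ≤ C * (R ^ j * (j.factorial : ℝ)) := mul_le_mul_of_nonneg_left h6 hC.le
        _ = C * R ^ j * j.factorial := by ring
    -- bound Z j * F0 and G0 * Z j
    have hZF0 : ‖Z j * F 0‖ ≤ ‖Z j‖ * C := by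
      calc ‖Z j * F 0‖ ≤ ‖Z j‖ * ‖F 0‖ := Matrix.linfty_opNorm_mul _ _
        _ ≤ ‖Z j‖ * C := mul_le_mul_of_nonneg_left hF0 (norm_nonneg _)
    have hG0Z : ‖G 0 * Z j‖ ≤ C * ‖Z j‖ := by
      calc ‖G 0 * Z j‖ ≤ ‖G 0‖ * ‖Z j‖ := Matrix.linfty_opNorm_mul _ _
        _ ≤ C * ‖Z j‖ := mul_le_mul_of_nonneg_right hG0 (norm_nonneg _)
    -- main estimate
    have hmain : (j : ℝ) * ‖Z j‖
        ≤ C * R ^ j * j.factorial + 2 * C * D * R ^ j * j.factorial + 2 * C * ‖Z j‖ := by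
      rw [hsmul, heq]
      calc ‖-X (j - 1) + (∑ p ∈ Finset.Icc 1 j, (G p * Z (j - p) - Z (j - p) * F p))
            - (Z j * F 0 - G 0 * Z j)‖
          ≤ ‖-X (j - 1) + (∑ p ∈ Finset.Icc 1 j, (G p * Z (j - p) - Z (j - p) * F p))‖
            + ‖Z j * F 0 - G 0 * Z j‖ := norm_sub_le _ _
        _ ≤ ‖-X (j - 1)‖ + ‖∑ p ∈ Finset.Icc 1 j, (G p * Z (j - p) - Z (j - p) * F p)‖
            + (‖Z j * F 0‖ + ‖G 0 * Z j‖) := by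
            have := norm_add_le (-X (j - 1))
              (∑ p ∈ Finset.Icc 1 j, (G p * Z (j - p) - Z (j - p) * F p))
            have := norm_sub_le (Z j * F 0) (G 0 * Z j)
            linarith
        _ ≤ C * R ^ j * j.factorial + 2 * C * D * R ^ j * j.factorial + 2 * C * ‖Z j‖ := by
            rw [norm_neg]
            linarith
    -- conclude
    have hZnn : (0:ℝ) ≤ ‖Z j‖ := norm_nonneg _
    have hP := hPpos j
    nlinarith [mul_le_mul_of_nonneg_right hD1 (le_of_lt hC),
      mul_pos hDpos hP, mul_nonneg (mul_nonneg (le_of_lt hC) (le_of_lt hDpos)) (le_of_lt hP)]
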